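/- Let {X_ℓ, f_ℓ} be an inverse sequence of compact metric spaces with surjective continuous bonding functions and let g : varprojlim{X_ℓ, f_ℓ} → varprojlim{X_ℓ, f_ℓ} be a continuous function. The following are equivalent: (1) g(x) ≠ x for each point x ∈ varprojlim{X_ℓ, f_ℓ}; (2) for all sequences (n_ℓ), (m_ℓ) of positive integers with m_{k+1} ≥ m_k, n_{k+1} > n_k, and m_k ≥ n_k for each k, and for every sequence (H_ℓ) of upper semicontinuous set-valued functions H_ℓ : X_{m_ℓ} ⊸ X_{n_ℓ} satisfying (a) f_{j,n_r}(H_r(x)) ⊆ f_{j,n_k}(H_k(f_{m_k,m_r}(x))) for each positive integer k, each j ∈ {1, …, n_k}, each r > k and each x ∈ X_{m_r}, (b) f_{j,n_k}(p_{n_k}(g(x))) ∈ f_{j,n_k}(H_k(p_{m_k}(x))) for each positive integer k, each j ∈ {1, …, n_k}, and each x ∈ varprojlim{X_ℓ, f_ℓ}, and (c) lim_{k→∞} diam(f_{j,n_k}(H_k(p_{m_k}(x)))) = 0 for each positive integer j and each x ∈ varprojlim{X_ℓ, f_ℓ}, there exist a positive integer k and j ∈ {1, …, n_k} such that f_{j,m_k}(x)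 ∉ f_{j,n_k}(H_k(x)) for each point x ∈ X_{m_k}. -/
import Mathlib


open Metric Filter Set Function

/-- The inverse limit of an inverse sequence `{X n, f n}` of spaces with
single-valued bonding maps `f n : X (n+1) → X n`. -/
def invLim (X : ℕ → Type*) (f : ∀ n, X (n + 1) → X n) : Set (∀ n, X n) :=
  {x | ∀ n, x n = f n (x (n + 1))}

/-- The composite bonding map `f_{n,m} : X m → X n` for `n ≤ m`. -/
def bondMap {X : ℕ → Type*} (f : ∀ n, X (n + 1) → X n) {n m : ℕ} (h : n ≤ m) :
    X m → X n :=
  Nat.leRecOn (C := fun k => X k → X n) h (fun {k} g => g ∘ f k) id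

/-- A set-valued function is upper semicontinuous (with nonempty closed values):
all of its values are nonempty closed sets and its graph is closed. -/
def IsUSC {A B : Type*} [TopologicalSpace A] [TopologicalSpace B] (F : A → Set B) : Prop :=
  (∀ a, (F a).Nonempty) ∧ (∀ a, IsClosed (F a)) ∧ IsClosed {p : A × B | p.2 ∈ F p.1}

/-- The `T_{n,m}` transformation of a map between inverse limits:
`T_{n,m}(g)(x) = q_n (g (p_m ⁻¹ x))`. -/
def Ttrans {X Y : ℕ → Type*} {f : ∀ n, X (n + 1) → X n} {gs : ∀ n, Y (n + 1) → Y n}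
    (g : ↥(invLim X f) → ↥(invLim Y gs)) (n m : ℕ) (x : X m) : Set (Y n) :=
  {y | ∃ z : ↥(invLim X f), z.1 m = x ∧ (g z).1 n = y}

/-- A space has the fixed point property if every continuous self-map has a fixed point. -/
def HasFPP (Z : Type*) [TopologicalSpace Z] : Prop :=
  ∀ g : Z → Z, Continuous g → ∃ p, g p = p

section Aux

variable {X : ℕ → Type*} {f : ∀ n, X (n + 1) → X n}

theorem bondMap_self {n : ℕ} (h : n ≤ n) (x : X n) : bondMap f h x = x :=
  congrFun (Nat.leRecOn_self (C := fun k => X k → X n) (next := fun {k} g => g ∘ f k) id) x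

theorem bondMap_succ {n m : ℕ} (h : n ≤ m + 1) (h' : n ≤ m) (x : X (m + 1)) :
    bondMap f h x = bondMap f h' (f m x) :=
  congrFun (Nat.leRecOn_succ (C := fun k => X k → X n) (next := fun {k} g => g ∘ f k)
    h' (h2 := h) id) x

theorem bondMap_succ_left {n m : ℕ} (h : n + 1 ≤ m) (x : X m) :
    f n (bondMap f h x) = bondMap f (Nat.le_of_succ_le h) x := by
  induction m, h using Nat.le_induction with
  | base =>
    rw [bondMap_self, bondMap_succ _ le_rfl, bondMap_self]
  | succ m hm ih =>
    rw [bondMap_succ _ hm, bondMap_succ _ (Nat.le_of_succ_le hm), ih]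

theorem bondMap_trans {n m k : ℕ} (h1 : n ≤ m) (h2 : m ≤ k) (h3 : n ≤ k) (x : X k) :
    bondMap f h1 (bondMap f h2 x) = bondMap f h3 x := by
  induction k, h2 using Nat.le_induction with
  | base => rw [bondMap_self]
  | succ k hk ih =>
    rw [bondMap_succ h3 (h1.trans hk), bondMap_succ _ hk, ih]

theorem bondMap_continuous [∀ n, TopologicalSpace (X n)] (hfc : ∀ n, Continuous (f n))
    {n m : ℕ} (h : n ≤ m) : Continuous (bondMap f h) := by
  induction m, h using Nat.le_induction with
  | base =>
    have : bondMap f (le_rfl : n ≤ n) = id := funext fun x => bondMap_self _ x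
    rw [this]; exact continuous_id
  | succ m hm ih =>
    have : bondMap f (hm.trans m.le_succ) = bondMap f hm ∘ f m :=
      funext fun x => bondMap_succ _ hm x
    rw [this]; exact ih.comp (hfc m)

theorem invLim_coherent {z : ∀ n, X n} (hz : z ∈ invLim X f) {n m : ℕ} (h : n ≤ m) :
    z n = bondMap f h (z m) := by
  induction m, h using Nat.le_induction with
  | base => rw [bondMap_self]
  | succ m hm ih =>
    rw [bondMap_succ _ hm, ← hz m, ih]

theorem invLim_isClosed [∀ n, TopologicalSpace (X n)] [∀ n, T2Space (X n)]
    (hfc : ∀ n, Continuous (f n)) : IsClosed (invLim X f) := by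
  have : invLim X f = ⋂ n, {x : ∀ n, X n | x n = f n (x (n + 1))} := by
    ext x; simp [invLim]
  rw [this]
  exact isClosed_iInter fun n =>
    isClosed_eq (continuous_apply n) ((hfc n).comp (continuous_apply (n + 1)))

/-- surjectivity of projections -/
theorem invLim_proj_surj (hfs : ∀ n, Surjective (f n)) (m : ℕ) (x : X m) :
    ∃ z ∈ invLim X f, z m = x := by
  -- build the tower above x
  let w : ∀ t, X (m + t) := fun t => Nat.rec x (fun t y => surjInv (hfs (m + t)) y) t
  have hw : ∀ t, f (m + t) (w (t + 1)) = w t := fun t => surjInv_eq (hfs (m + t)) (w t)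
  refine ⟨fun n => bondMap f (Nat.le_add_left n m) (w n), fun n => ?_, ?_⟩
  · have h1 : n + 1 ≤ m + (n + 1) := Nat.le_add_left _ m
    have h2 : n ≤ m + n := Nat.le_add_left n m
    calc bondMap f (Nat.le_add_left n m) (w n)
        = bondMap f h2 (f (m + n) (w (n + 1))) := by rw [hw n]
      _ = bondMap f (h2.trans (m + n).le_succ) (w (n + 1)) := (bondMap_succ _ h2 _).symm
      _ = f n (bondMap f h1 (w (n + 1))) := (bondMap_succ_left h1 _).symm
  · have key : ∀ t, bondMap f (Nat.le_add_right m t) (w t) = x := by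
      intro t
      induction t with
      | zero => exact bondMap_self _ x
      | succ t ih =>
        rw [bondMap_succ _ (Nat.le_add_right m t), hw t, ih]
    exact key m

theorem diam_tendsto_zero {α : Type*} [MetricSpace α] (S : ℕ → Set α)
    (hc : ∀ k, IsCompact (S k)) (hdec : ∀ k, S (k + 1) ⊆ S k) (p : α)
    (hint : (⋂ k, S k) ⊆ {p}) :
    Tendsto (fun k => diam (S k)) atTop (nhds (0 : ℝ)) := by
  have hanti : Antitone S := antitone_nat_of_succ_le hdec
  rw [Metric.tendsto_atTop]
  intro ε hε
  -- find N with S N ⊆ ball p (ε/3)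
  have hball : ∃ N, S N ⊆ ball p (ε / 3) := by
    by_contra hcon
    push_neg at hcon
    have hne : ∀ k, (S k \ ball p (ε / 3)).Nonempty := by
      intro k
      rcases not_subset.1 (hcon k) with ⟨x, hx, hx'⟩
      exact ⟨x, hx, hx'⟩
    have hcl : ∀ k, IsClosed (S k \ ball p (ε / 3)) := fun k =>
      ((hc k).isClosed).sdiff isOpen_ball
    have hcpt : IsCompact (S 0 \ ball p (ε / 3)) :=
      (hc 0).of_isClosed_subset (hcl 0) diff_subset
    obtain ⟨x, hx⟩ := IsCompact.nonempty_iInter_of_sequence_nonempty_isCompact_isClosed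
      (fun k => S k \ ball p (ε / 3))
      (fun k => diff_subset_diff_left (hdec k)) hne hcpt hcl
    simp only [mem_iInter, mem_diff] at hx
    have : x ∈ ⋂ k, S k := mem_iInter.2 fun k => (hx k).1
    have hxp : x = p := hint this
    exact (hx 0).2 (hxp ▸ mem_ball_self (by linarith))
  obtain ⟨N, hN⟩ := hball
  refine ⟨N, fun k hk => ?_⟩
  have hsub : S k ⊆ ball p (ε / 3) := (hanti hk).trans hN
  have hb : diam (S k) ≤ 2 * (ε / 3) :=
    (diam_mono hsub isBounded_ball).trans (diam_ball (by linarith))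
  rw [Real.dist_eq, sub_zero, abs_of_nonneg diam_nonneg]
  linarith


section Main

variable {X : ℕ → Type*} [∀ n, MetricSpace (X n)] [∀ n, CompactSpace (X n)]
  {f : ∀ n, X (n + 1) → X n}

theorem invLim_isCompact (hfc : ∀ n, Continuous (f n)) : IsCompact (invLim X f) :=
  (invLim_isClosed hfc).isCompact

/-- The key backward-direction construction check. -/
theorem backward_aux (hfc : ∀ n, Continuous (f n)) (hfs : ∀ n, Surjective (f n))
    (g : ↥(invLim X f) → ↥(invLim X f)) (hg : Continuous g)
    (H : ∀ k, X k → Set (X k))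
    (hH : ∀ k x, H k x = (fun w : ↥(invLim X f) => (g w).1 k) '' {w | w.1 k = x}) :
    (∀ k, (∀ a, (H k a).Nonempty) ∧ (∀ a, IsClosed (H k a)) ∧
      IsClosed {p : X k × X k | p.2 ∈ H k p.1}) ∧
    (∀ j : ℕ, ∀ z : ↥(invLim X f),
        Tendsto (fun k =>
            diam (if hj : j ≤ k then
              bondMap f hj '' H k (z.1 k)
            else (∅ : Set (X j))))
          atTop (nhds (0 : ℝ))) := by
  haveI : CompactSpace ↥(invLim X f) := isCompact_iff_compactSpace.mp (invLim_isCompact hfc)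
  have hec : ∀ n, Continuous (fun w : ↥(invLim X f) => w.1 n) := fun n =>
    (continuous_apply n).comp continuous_subtype_val
  have hgc : ∀ n, Continuous (fun w : ↥(invLim X f) => (g w).1 n) := fun n =>
    (continuous_apply n).comp (continuous_subtype_val.comp hg)
  -- graph of H k
  have hgraph : ∀ k, {p : X k × X k | p.2 ∈ H k p.1} =
      range (fun w : ↥(invLim X f) => (w.1 k, (g w).1 k)) := by
    intro k
    ext ⟨a, b⟩
    simp [hH, Prod.ext_iff, eq_comm, and_comm]
  have hgraphcl : ∀ k, IsClosed {p : X k × X k | p.2 ∈ H k p.1} := by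
    intro k
    rw [hgraph k]
    exact (isCompact_range ((hec k).prodMk (hgc k))).isClosed
  constructor
  · intro k
    refine ⟨fun a => ?_, fun a => ?_, hgraphcl k⟩
    · obtain ⟨z, hz, hzk⟩ := invLim_proj_surj hfs k a
      exact ⟨(g ⟨z, hz⟩).1 k, by rw [hH]; exact ⟨⟨z, hz⟩, hzk, rfl⟩⟩
    · have : H k a = (fun b => (a, b)) ⁻¹' {p : X k × X k | p.2 ∈ H k p.1} := rfl
      rw [this]
      exact (hgraphcl k).preimage (Continuous.prodMk_right a)
  · intro j z
    set S : ℕ → Set (X j) :=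
      fun k => (fun w : ↥(invLim X f) => (g w).1 j) '' {w | w.1 k = z.1 k} with hS
    have hAcl : ∀ k, IsClosed {w : ↥(invLim X f) | w.1 k = z.1 k} := fun k =>
      isClosed_eq (hec k) continuous_const
    have hScpt : ∀ k, IsCompact (S k) := fun k =>
      ((hAcl k).isCompact).image (hgc j)
    have hSdec : ∀ k, S (k + 1) ⊆ S k := by
      rintro k _ ⟨w, hw, rfl⟩
      exact ⟨w, by simp only [mem_setOf_eq] at hw ⊢; rw [w.2 k, z.2 k, hw], rfl⟩
    have hSint : (⋂ k, S k) ⊆ {(g z).1 j} := by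
      intro y hy
      simp only [mem_iInter] at hy
      set B : ℕ → Set ↥(invLim X f) :=
        fun k => {w | w.1 k = z.1 k} ∩ (fun w : ↥(invLim X f) => (g w).1 j) ⁻¹' {y} with hB
      have hBcl : ∀ k, IsClosed (B k) := fun k =>
        (hAcl k).inter (isClosed_singleton.preimage (hgc j))
      have hBne : ∀ k, (B k).Nonempty := by
        intro k
        obtain ⟨w, hw, hwy⟩ := hy k
        exact ⟨w, hw, hwy⟩
      have hBdec : ∀ k, B (k + 1) ⊆ B k := by
        rintro k w ⟨hw, hwy⟩
        refine ⟨?_, hwy⟩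
        simp only [mem_setOf_eq] at hw ⊢
        rw [w.2 k, z.2 k, hw]
      obtain ⟨w, hw⟩ := IsCompact.nonempty_iInter_of_sequence_nonempty_isCompact_isClosed
        B hBdec hBne ((hBcl 0).isCompact) hBcl
      simp only [mem_iInter, hB, mem_inter_iff, mem_setOf_eq, mem_preimage,
        mem_singleton_iff] at hw
      have hwz : w = z := Subtype.ext (funext fun k => (hw k).1)
      rw [mem_singleton_iff, ← (hw 0).2, hwz]
    have hmain : Tendsto (fun k => diam (S k)) atTop (nhds (0 : ℝ)) :=
      diam_tendsto_zero S hScpt hSdec _ hSint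
    refine hmain.congr' ?_
    filter_upwards [eventually_ge_atTop j] with k hjk
    rw [dif_pos hjk]
    congr 1
    ext y
    constructor
    · rintro ⟨w, hw, rfl⟩
      refine ⟨(g w).1 k, ?_, (invLim_coherent (g w).2 hjk).symm⟩
      rw [hH]
      exact ⟨w, hw, rfl⟩
    · rintro ⟨y', hy', rfl⟩
      rw [hH] at hy'
      obtain ⟨w, hw, rfl⟩ := hy'
      exact ⟨w, hw, invLim_coherent (g w).2 hjk⟩

end Main

end Aux

theorem stmt13
    {X : ℕ → Type*} [∀ n, MetricSpace (X n)] [∀ n, CompactSpace (X n)]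
    (f : ∀ n, X (n + 1) → X n)
    (hfc : ∀ n, Continuous (f n)) (hfs : ∀ n, Surjective (f n))
    (g : ↥(invLim X f) → ↥(invLim X f)) (hg : Continuous g) :
    (∀ x : ↥(invLim X f), g x ≠ x) ↔
    (∀ ns ms : ℕ → ℕ,
      (∀ k, ms k ≤ ms (k + 1)) → (∀ k, ns k < ns (k + 1)) →
      ∀ hnm : (∀ k, ns k ≤ ms k),
      ∀ H : ∀ k, X (ms k) → Set (X (ns k)),
      (∀ k, IsUSC (H k)) →
      (∀ k r : ℕ, k < r → ∀ (hnr : ns k ≤ ns r) (hmr : ms k ≤ ms r),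
        ∀ j : ℕ, ∀ hj : j ≤ ns k, ∀ x : X (ms r),
          bondMap f (hj.trans hnr) '' H r x ⊆
            bondMap f hj '' H k (bondMap f hmr x)) →
      (∀ k j : ℕ, ∀ hj : j ≤ ns k, ∀ z : ↥(invLim X f),
        bondMap f hj ((g z).1 (ns k)) ∈ bondMap f hj '' H k (z.1 (ms k))) →
      (∀ j : ℕ, ∀ z : ↥(invLim X f),
        Tendsto (fun k =>
            diam (if hj : j ≤ ns k then
              bondMap f hj '' H k (z.1 (ms k))
            else (∅ : Set (X j))))
          atTop (nhds (0 : ℝ))) →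
      ∃ k j : ℕ, ∃ hj : j ≤ ns k, ∀ x : X (ms k),
        bondMap f (hj.trans (hnm k)) x ∉ bondMap f hj '' H k x) := by
  have hclosedInv : IsClosed (invLim X f) := invLim_isClosed hfc
  have hcptInv : IsCompact (invLim X f) := hclosedInv.isCompact
  constructor
  · -- forward direction
    intro hfix ns ms hms hns hnm H hUSC hA hB hC
    by_contra hcon
    push_neg at hcon
    have hnsm : StrictMono ns := strictMono_nat_of_lt_succ hns
    have hmsm : Monotone ms := monotone_nat_of_le_succ hms
    choose x hx using fun r => hcon r (ns r) le_rfl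
    choose Z hZmem hZproj using fun r => invLim_proj_surj (f := f) hfs (ms r) (x r)
    have hkey : ∀ r, Z r (ns r) ∈ H r (Z r (ms r)) := by
      intro r
      obtain ⟨y, hy, hyeq⟩ := hx r
      rw [bondMap_self] at hyeq
      have h1 : Z r (ns r) = bondMap f (le_rfl.trans (hnm r)) (Z r (ms r)) :=
        invLim_coherent (hZmem r) _
      rw [hZproj r] at h1
      rw [hZproj r, h1]
      exact hyeq ▸ hy
    obtain ⟨z, hzmem, hzcl⟩ := hcptInv.exists_clusterPt (f := map Z atTop)
      (le_principal_iff.2 (mem_map.2 (Eventually.of_forall hZmem)))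
    have capture : ∀ C : Set (∀ n, X n), IsClosed C → (∀ᶠ r in atTop, Z r ∈ C) → z ∈ C := by
      intro C hCcl hCev
      have h1 : ClusterPt z (𝓟 C) := hzcl.mono (le_principal_iff.2 (mem_map.2 hCev))
      rwa [← mem_closure_iff_clusterPt, hCcl.closure_eq] at h1
    have hmem : ∀ k j (hj : j ≤ ns k), z j ∈ bondMap f hj '' H k (z (ms k)) := by
      intro k j hj
      set G : Set (X (ms k) × X j) :=
        (fun p : X (ms k) × X (ns k) => (p.1, bondMap f hj p.2)) '' {p | p.2 ∈ H k p.1} with hG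
      have hGmem : ∀ (a : X (ms k)) (b : X j), b ∈ bondMap f hj '' H k a → (a, b) ∈ G := by
        rintro a b ⟨y, hy, rfl⟩
        exact ⟨(a, y), hy, rfl⟩
      have hGmem' : ∀ (a : X (ms k)) (b : X j), (a, b) ∈ G → b ∈ bondMap f hj '' H k a := by
        rintro a b ⟨⟨a', y⟩, hy, heq⟩
        rw [Prod.ext_iff] at heq
        obtain ⟨h1, h2⟩ := heq
        simp only at h1 h2
        subst h1
        exact ⟨y, hy, h2⟩
      have hGcpt : IsCompact G :=
        (((hUSC k).2.2).isCompact).image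
          (continuous_fst.prodMk ((bondMap_continuous hfc hj).comp continuous_snd))
      have hCcl : IsClosed ((fun w : ∀ n, X n => (w (ms k), w j)) ⁻¹' G) :=
        hGcpt.isClosed.preimage ((continuous_apply (ms k)).prodMk (continuous_apply j))
      have hev : ∀ᶠ r in atTop, Z r ∈ (fun w : ∀ n, X n => (w (ms k), w j)) ⁻¹' G := by
        filter_upwards [eventually_ge_atTop k] with r hr
        rcases eq_or_lt_of_le hr with rfl | hlt
        · refine hGmem _ _ ?_
          exact ⟨Z k (ns k), hkey k, (invLim_coherent (hZmem k) hj).symm⟩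
        · refine hGmem _ _ ?_
          have hsub := hA k r hlt (hnsm hlt).le (hmsm hlt.le) j hj (Z r (ms r))
          have helt : bondMap f (hj.trans (hnsm hlt).le) (Z r (ns r)) ∈
              bondMap f (hj.trans (hnsm hlt).le) '' H r (Z r (ms r)) :=
            mem_image_of_mem _ (hkey r)
          have := hsub helt
          rw [← invLim_coherent (hZmem r) (hmsm hlt.le),
            ← invLim_coherent (hZmem r) (hj.trans (hnsm hlt).le)] at this
          exact this
      exact hGmem' _ _ (capture _ hCcl hev)
    set zz : ↥(invLim X f) := ⟨z, hzmem⟩ with hzz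
    have hfixpt : ∀ j, (g zz).1 j = z j := by
      intro j
      have hev2 : ∀ᶠ k in atTop, dist (z j) ((g zz).1 j) ≤
          diam (if hj : j ≤ ns k then bondMap f hj '' H k (zz.1 (ms k))
            else (∅ : Set (X j))) := by
        filter_upwards [eventually_ge_atTop j] with k hjk
        have hjns : j ≤ ns k := hjk.trans hnsm.le_apply
        rw [dif_pos hjns]
        have h1 : z j ∈ bondMap f hjns '' H k (z (ms k)) := hmem k j hjns
        have h2 := hB k j hjns zz
        rw [← invLim_coherent (g zz).2 hjns] at h2
        have hbd : Bornology.IsBounded (bondMap f hjns '' H k (z (ms k))) :=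
          ((((hUSC k).2.1 _).isCompact).image (bondMap_continuous hfc hjns)).isBounded
        exact dist_le_diam_of_mem hbd h1 h2
      have hle : dist (z j) ((g zz).1 j) ≤ 0 := ge_of_tendsto (hC j zz) hev2
      have : dist (z j) ((g zz).1 j) = 0 := le_antisymm hle dist_nonneg
      exact (dist_eq_zero.1 this).symm
    exact hfix zz (Subtype.ext (funext hfixpt))
  · -- backward direction
    intro hRHS x0 heq
    set H : ∀ k, X k → Set (X k) :=
      fun k x => (fun w : ↥(invLim X f) => (g w).1 k) '' {w | w.1 k = x} with hHdef
    obtain ⟨husc, hc⟩ := backward_aux hfc hfs g hg H (fun k x => rfl)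
    have hA : ∀ k r : ℕ, k < r → ∀ (hnr : k ≤ r) (hmr : k ≤ r),
        ∀ j : ℕ, ∀ hj : j ≤ k, ∀ x : X r,
          bondMap f (hj.trans hnr) '' H r x ⊆ bondMap f hj '' H k (bondMap f hmr x) := by
      rintro k r hkr hnr hmr j hj x _ ⟨y, ⟨w, hw, rfl⟩, rfl⟩
      refine ⟨(g w).1 k, ⟨w, ?_, rfl⟩, ?_⟩
      · show w.1 k = bondMap f hmr x
        rw [← hw]
        exact invLim_coherent w.2 hmr
      · show bondMap f hj ((g w).1 k) = bondMap f (hj.trans hnr) ((g w).1 r)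
        rw [invLim_coherent (g w).2 hnr]
        exact bondMap_trans hj hnr (hj.trans hnr) _
    have hB : ∀ k j : ℕ, ∀ hj : j ≤ k, ∀ w : ↥(invLim X f),
        bondMap f hj ((g w).1 k) ∈ bondMap f hj '' H k (w.1 k) :=
      fun k j hj w => mem_image_of_mem _ ⟨w, rfl, rfl⟩
    obtain ⟨k, j, hj, hx⟩ := hRHS (fun k => k) (fun k => k)
      (fun k => Nat.le_succ k) (fun k => Nat.lt_succ_self k) (fun k => le_rfl)
      H (fun k => husc k) hA hB hc
    refine hx (x0.1 k) (mem_image_of_mem _ ?_)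
    exact ⟨x0, rfl, congrFun (congrArg Subtype.val heq) k⟩
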